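/- If 0 ≤ ρ(α), ρ(β) ≤ C and 0 ≤ ρ'(α), ρ'(β) ≤ C with ‖α‖, ‖β‖ ≤ R, then the mixer kernel satisfies the Lipschitz estimate |M[ρ](α,β) - M[ρ'](α,β)| ≤ (1 + 2RC)·max(|ρ(α)-ρ'(α)|, |ρ(β)-ρ'(β)|) (any constant of the form c(R,C) depending only on R and C is acceptable). -/
import Mathlib


noncomputable def r (d : ℝ) : ℝ := -d / (1 + |d|)

noncomputable def dd (ρ : EuclideanSpace ℝ (Fin 2) → ℝ) (α β : EuclideanSpace ℝ (Fin 2)) : ℝ :=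
  ‖β‖ * ρ β - ‖α‖ * ρ α

noncomputable def M (ρ : EuclideanSpace ℝ (Fin 2) → ℝ) (α β : EuclideanSpace ℝ (Fin 2)) : ℝ :=
  if dd ρ α β ≥ 0 then r (dd ρ α β) * ρ α else r (dd ρ α β) * ρ β

lemma r_abs_le_one (x : ℝ) : |r x| ≤ 1 := by
  unfold r
  have h : (0:ℝ) < 1 + |x| := by positivity
  rw [abs_div, abs_neg, abs_of_pos h, div_le_one h]
  linarith

lemma r_abs_le (x : ℝ) : |r x| ≤ |x| := by
  unfold r
  have h : (0:ℝ) < 1 + |x| := by positivity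
  rw [abs_div, abs_neg, abs_of_pos h, div_le_iff₀ h]
  nlinarith [abs_nonneg x]

lemma r_lip (x y : ℝ) : |r x - r y| ≤ |x - y| := by
  have hx : (0:ℝ) < 1 + |x| := by positivity
  have hy : (0:ℝ) < 1 + |y| := by positivity
  rw [abs_sub_le_iff]
  constructor <;>
  · unfold r
    first
      | rw [div_sub_div _ _ hx.ne' hy.ne', div_le_iff₀ (by positivity)]
      | rw [div_sub_div _ _ hy.ne' hx.ne', div_le_iff₀ (by positivity)]
    rcases abs_cases x with ⟨hx1, hx2⟩ | ⟨hx1, hx2⟩ <;>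
      rcases abs_cases y with ⟨hy1, hy2⟩ | ⟨hy1, hy2⟩ <;>
      rw [hx1, hy1] <;>
      rcases abs_cases (x - y) with ⟨h1, h2⟩ | ⟨h1, h2⟩ <;>
      rw [h1] <;>
      first
        | nlinarith [mul_nonneg h2 (mul_nonneg hx2 hy2)]
        | nlinarith [mul_nonneg h2 (mul_nonneg (neg_nonneg.2 hx2.le) (neg_nonneg.2 hy2.le))]
        | nlinarith [mul_nonneg h2 (mul_nonneg hx2 (neg_nonneg.2 hy2.le))]
        | nlinarith [mul_nonneg h2 (mul_nonneg (neg_nonneg.2 hx2.le) hy2)]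
        | nlinarith [mul_nonneg (neg_nonneg.2 h2.le) (mul_nonneg hx2 hy2)]
        | nlinarith [mul_nonneg (neg_nonneg.2 h2.le)
            (mul_nonneg (neg_nonneg.2 hx2.le) (neg_nonneg.2 hy2.le))]
        | nlinarith [mul_nonneg (neg_nonneg.2 h2.le) (mul_nonneg hx2 (neg_nonneg.2 hy2.le))]
        | nlinarith [mul_nonneg (neg_nonneg.2 h2.le) (mul_nonneg (neg_nonneg.2 hx2.le) hy2)]

theorem mixer_lipschitz_in_rho (ρ ρ' : EuclideanSpace ℝ (Fin 2) → ℝ)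
    (α β : EuclideanSpace ℝ (Fin 2)) (C R : ℝ)
    (hρ : 0 ≤ ρ α ∧ ρ α ≤ C ∧ 0 ≤ ρ β ∧ ρ β ≤ C)
    (hρ' : 0 ≤ ρ' α ∧ ρ' α ≤ C ∧ 0 ≤ ρ' β ∧ ρ' β ≤ C)
    (hα : ‖α‖ ≤ R) (hβ : ‖β‖ ≤ R) :
    |M ρ α β - M ρ' α β| ≤ (1 + 2 * R * C) * max |ρ α - ρ' α| |ρ β - ρ' β| := by
  obtain ⟨h1, h2, h3, h4⟩ := hρ
  obtain ⟨h5, h6, h7, h8⟩ := hρ'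
  set m := max |ρ α - ρ' α| |ρ β - ρ' β| with hm
  have hm0 : 0 ≤ m := le_trans (abs_nonneg _) (le_max_left _ _)
  have hma : |ρ α - ρ' α| ≤ m := le_max_left _ _
  have hmb : |ρ β - ρ' β| ≤ m := le_max_right _ _
  have hR : 0 ≤ R := le_trans (norm_nonneg α) hα
  have hC : 0 ≤ C := le_trans h1 h2
  set d := dd ρ α β with hd
  set d' := dd ρ' α β with hd'
  have hdd : |d - d'| ≤ 2 * R * m := by
    have he : d - d' = ‖β‖ * (ρ β - ρ' β) - ‖α‖ * (ρ α - ρ' α) := by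
      simp only [hd, hd', dd]; ring
    rw [he]
    calc |‖β‖ * (ρ β - ρ' β) - ‖α‖ * (ρ α - ρ' α)|
        ≤ |‖β‖ * (ρ β - ρ' β)| + |‖α‖ * (ρ α - ρ' α)| := abs_sub _ _
      _ ≤ R * m + R * m := by
          rw [abs_mul, abs_mul, abs_norm, abs_norm]
          exact add_le_add (mul_le_mul hβ hmb (abs_nonneg _) hR)
            (mul_le_mul hα hma (abs_nonneg _) hR)
      _ = 2 * R * m := by ring
  have key : ∀ a b : ℝ, 0 ≤ b → b ≤ C → |a - b| ≤ m →
      |r d * a - r d' * b| ≤ (1 + 2 * R * C) * m := by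
    intro a b hb hbc hab
    calc |r d * a - r d' * b|
        = |r d * (a - b) + (r d - r d') * b| := by congr 1; ring
      _ ≤ |r d * (a - b)| + |(r d - r d') * b| := abs_add_le _ _
      _ = |r d| * |a - b| + |r d - r d'| * b := by
          rw [abs_mul, abs_mul, abs_of_nonneg hb]
      _ ≤ 1 * m + |d - d'| * C :=
          add_le_add (mul_le_mul (r_abs_le_one d) hab (abs_nonneg _) zero_le_one)
            (mul_le_mul (r_lip d d') hbc hb (abs_nonneg _))
      _ ≤ 1 * m + (2 * R * m) * C := by
          gcongr
      _ = (1 + 2 * R * C) * m := by ring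
  have mixed : ∀ a b : ℝ, 0 ≤ a → a ≤ C → 0 ≤ b → b ≤ C → |d| + |d'| = |d - d'| →
      |r d * a - r d' * b| ≤ (1 + 2 * R * C) * m := by
    intro a b ha hac hb hbc hs
    calc |r d * a - r d' * b|
        ≤ |r d * a| + |r d' * b| := abs_sub _ _
      _ = |r d| * a + |r d'| * b := by
          rw [abs_mul, abs_mul, abs_of_nonneg ha, abs_of_nonneg hb]
      _ ≤ |d| * C + |d'| * C :=
          add_le_add (mul_le_mul (r_abs_le d) hac ha (abs_nonneg _))
            (mul_le_mul (r_abs_le d') hbc hb (abs_nonneg _))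
      _ = (|d| + |d'|) * C := by ring
      _ ≤ (2 * R * m) * C := by rw [hs]; exact mul_le_mul_of_nonneg_right hdd hC
      _ ≤ (1 + 2 * R * C) * m := by nlinarith
  by_cases hc1 : d ≥ 0 <;> by_cases hc2 : d' ≥ 0 <;>
    simp only [M, ← hd, ← hd', hc1, hc2, if_pos, if_neg, if_true, if_false]
  · exact key _ _ h5 h6 hma
  · have hc2' : d' < 0 := lt_of_not_ge hc2
    exact mixed _ _ h1 h2 h7 h8 (by
      rw [abs_of_nonneg hc1, abs_of_neg hc2', abs_of_nonneg (by linarith)]; ring)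
  · have hc1' : d < 0 := lt_of_not_ge hc1
    exact mixed _ _ h3 h4 h5 h6 (by
      rw [abs_of_neg hc1', abs_of_nonneg hc2, abs_of_neg (by linarith)]; ring)
  · exact key _ _ h7 h8 hmb
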